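/- For all N ≥ 2, all k ∈ {1,…,N−1} and all p ∈ (1/2,1): (a) for every ζ ∈ Ω_{N,k}, (L_{N,k} f^{(0)}_{N,k})(ζ) = −ϱ·f^{(0)}_{N,k}(ζ) − (√(pq)/(λ−1))·[λ^{ζ(N−1)/2} + λ^{ζ(1)/2} − a_{N,k}(N−1) − a_{N,k}(1)]; (b) consequently, for all ζ ≤ ζ' in Ω_{N,k}, (L_{N,k} f^{(0)}_{N,k})(ζ') − (L_{N,k} f^{(0)}_{N,k})(ζ) ≤ −ϱ·(f^{(0)}_{N,k}(ζ') − f^{(0)}_{N,k}(ζ)). -/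

import Mathlib

open Filter
open scoped Classical BigOperators Topology

namespace Wasep

/-- Particle configurations on a segment of length `N`
(site `x` of the paper, `x ∈ {1,…,N}`, is index `x-1 : Fin N`). -/
abbrev Conf (N : ℕ) := Fin N → Bool

/-- Number of particles of a configuration. -/
def numParticles {N : ℕ} (ξ : Conf N) : ℕ :=
  (Finset.univ.filter fun x => ξ x = true).card

/-- The left site of the bond `y` (the paper's site `y`, for `y ∈ {1,…,N-1}`). -/
def siteA {N : ℕ} (y : Fin (N - 1)) : Fin N := ⟨y.1, by have := y.isLt; omega⟩

/-- The right site of the bond `y` (the paper's site `y+1`, for `y ∈ {1,…,N-1}`). -/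
def siteB {N : ℕ} (y : Fin (N - 1)) : Fin N := ⟨y.1 + 1, by have := y.isLt; omega⟩

/-- Jump rate of the bond `y` in configuration `ξ`:
`q·1_{ξ(y)<ξ(y+1)} + p·1_{ξ(y)>ξ(y+1)}` with `q = 1-p`. -/
noncomputable def rate {N : ℕ} (p : ℝ) (ξ : Conf N) (y : Fin (N - 1)) : ℝ :=
  (if ξ (siteA y) = false ∧ ξ (siteB y) = true then 1 - p else 0) +
    (if ξ (siteA y) = true ∧ ξ (siteB y) = false then p else 0)

/-- The configuration `ξ^y`, with the contents of sites `y` and `y+1` swapped. -/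
def swapBond {N : ℕ} (ξ : Conf N) (y : Fin (N - 1)) : Conf N :=
  ξ ∘ Equiv.swap (siteA y) (siteB y)

/-- The ASEP generator acting on functions:
`(L f)(ξ) = Σ_{y=1}^{N-1} (q·1_{ξ(y)<ξ(y+1)} + p·1_{ξ(y)>ξ(y+1)})(f(ξ^y) − f(ξ))`. -/
noncomputable def gen (N : ℕ) (p : ℝ) (f : Conf N → ℝ) (ξ : Conf N) : ℝ :=
  ∑ y : Fin (N - 1), rate p ξ y * (f (swapBond ξ y) - f ξ)

/-- The ASEP generator, as a matrix:  `(L f)(ξ) = Σ_{ξ'} genM(ξ,ξ') f(ξ')`. -/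
noncomputable def genM (N : ℕ) (p : ℝ) : Matrix (Conf N) (Conf N) ℝ := fun ξ ξ' =>
  ∑ y : Fin (N - 1),
    rate p ξ y * ((if ξ' = swapBond ξ y then (1 : ℝ) else 0) - (if ξ' = ξ then (1 : ℝ) else 0))

/-- The semigroup `P_t = exp (t L)`; `Pt N p t ξ ξ'` is the transition
probability from `ξ` to `ξ'` in time `t`. -/
noncomputable def Pt (N : ℕ) (p t : ℝ) (ξ ξ' : Conf N) : ℝ :=
  (NormedSpace.exp (t • LinearMap.toContinuousLinearMap (Matrix.toLin' (genM N p))))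
    (fun η => if η = ξ' then (1 : ℝ) else 0) ξ

/-- `λ = p / q`. -/
noncomputable def lam (p : ℝ) : ℝ := p / (1 - p)

/-- The bias `b = p - q`. -/
def bias (p : ℝ) : ℝ := p - (1 - p)

/-- The increasing list of (1-based) particle positions `ξ_1 < ξ_2 < … < ξ_k`. -/
def particlePos {N : ℕ} (ξ : Conf N) : List ℕ :=
  ((Finset.univ.filter fun x => ξ x = true).sort (· ≤ ·)).map fun x => (x : ℕ) + 1

/-- `A(ξ) = Σ_{i=1}^k (N − k + i − ξ_i)`. -/
def Astat (N k : ℕ) {M : ℕ} (ξ : Conf M) : ℤ :=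
  ∑ i ∈ Finset.range k, ((N : ℤ) - k + (i + 1) - ((particlePos ξ).getD i 0 : ℤ))

/-- The partition function `Z_{N,k} = Σ_{ξ ∈ Ω⁰_{N,k}} λ^{−A(ξ)}`. -/
noncomputable def Zpart (N k : ℕ) (p : ℝ) : ℝ :=
  ∑ ξ ∈ Finset.univ.filter (fun ξ : Conf N => numParticles ξ = k), lam p ^ (-Astat N k ξ)

/-- The invariant measure `π_{N,k}(ξ) = λ^{−A(ξ)}/Z_{N,k}`,
extended by `0` outside of the `k`-particle sector. -/
noncomputable def statMeas (N k : ℕ) (p : ℝ) (ξ : Conf N) : ℝ :=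
  if numParticles ξ = k then lam p ^ (-Astat N k ξ) / Zpart N k p else 0

/-- Total variation distance `‖μ − ν‖_TV = sup_A (μ(A) − ν(A))` on a finite space. -/
noncomputable def tvDist {S : Type*} [Fintype S] (μ ν : S → ℝ) : ℝ :=
  ⨆ A : Finset S, (∑ x ∈ A, μ x - ∑ x ∈ A, ν x)

/-- `d^{N,k}(t) = max_{ξ ∈ Ω⁰_{N,k}} ‖P_t(ξ,·) − π_{N,k}‖_TV`. -/
noncomputable def distEq (N k : ℕ) (p t : ℝ) : ℝ :=
  ⨆ ξ : {ξ : Conf N // numParticles ξ = k},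
    tvDist (fun ξ' => Pt N p t ξ.1 ξ') (statMeas N k p)

/-- `T^{N,k}_mix(ε) = inf {t ≥ 0 : d^{N,k}(t) ≤ ε}`. -/
noncomputable def Tmix (N k : ℕ) (p ε : ℝ) : ℝ :=
  sInf {t : ℝ | 0 ≤ t ∧ distEq N k p t ≤ ε}

/-- The height function `h(ξ)(x) = Σ_{y=1}^x (2ξ(y) − 1)`, for `x ∈ {0,…,N}`. -/
def height {N : ℕ} (ξ : Conf N) (x : ℕ) : ℤ :=
  ∑ y ∈ Finset.univ.filter (fun y : Fin N => (y : ℕ) < x), (if ξ y then (1 : ℤ) else -1)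

/-- Pointwise order on height functions. -/
def heightLE {N : ℕ} (ξ ξ' : Conf N) : Prop := ∀ x ≤ N, height ξ x ≤ height ξ' x

/-- `ϱ = (√p − √q)²`. -/
noncomputable def rho (p : ℝ) : ℝ := (Real.sqrt p - Real.sqrt (1 - p)) ^ 2

/-- The spectral gap `gap_N = (√p − √q)² + 4√(pq)·sin²(π/(2N))`. -/
noncomputable def gapN (N : ℕ) (p : ℝ) : ℝ :=
  rho p + 4 * Real.sqrt (p * (1 - p)) * Real.sin (Real.pi / (2 * N)) ^ 2

/-- `a` solves the boundary value problem `√(pq)·Δa(x) = ϱ·a(x)` on `{1,…,N−1}`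
with `a(0) = 1` and `a(N) = λ^{(2k−N)/2}`, defining `a_{N,k}`. -/
def IsBVP (N k : ℕ) (p : ℝ) (a : ℕ → ℝ) : Prop :=
  a 0 = 1 ∧ a N = lam p ^ ((2 * (k : ℝ) - N) / 2) ∧
    ∀ x : ℕ, 1 ≤ x → x ≤ N - 1 →
      Real.sqrt (p * (1 - p)) * (a (x + 1) + a (x - 1) - 2 * a x) = rho p * a x

/-- `f^{(j)}_{N,k}(ζ) = Σ_{x=1}^{N-1} sin(jπx/N)·(λ^{ζ(x)/2} − a_{N,k}(x))/(λ−1)`,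
viewed as a function of the particle configuration via the height function. -/
noncomputable def eigenF (N : ℕ) (p : ℝ) (a : ℕ → ℝ) (j : ℕ) (ξ : Conf N) : ℝ :=
  ∑ x ∈ Finset.Icc 1 (N - 1),
    Real.sin ((j : ℝ) * Real.pi * x / N) *
      ((lam p ^ ((height ξ x : ℝ) / 2) - a x) / (lam p - 1))

/-- `f^{(0)}_{N,k}(ζ) = Σ_{x=1}^{N-1} (λ^{ζ(x)/2} − a_{N,k}(x))/(λ−1)`. -/
noncomputable def fZero (N : ℕ) (p : ℝ) (a : ℕ → ℝ) (ξ : Conf N) : ℝ :=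
  ∑ x ∈ Finset.Icc 1 (N - 1), (lam p ^ ((height ξ x : ℝ) / 2) - a x) / (lam p - 1)

/-- The maximal configuration `ξ^max` (particles on sites `1,…,k`);
its height function is `∧`. -/
def confMax (N k : ℕ) : Conf N := fun x => decide ((x : ℕ) < k)

/-- The minimal configuration `ξ^min` (particles on sites `N−k+1,…,N`);
its height function is `∨`. -/
def confMin (N k : ℕ) : Conf N := fun x => decide (N - k ≤ (x : ℕ))

/-- `π_{N,k}(ξ(x) = 1)` for the (0-based) site `x : Fin N`. -/
noncomputable def occProb (N k : ℕ) (p : ℝ) (x : Fin N) : ℝ :=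
  ∑ ξ ∈ Finset.univ.filter (fun ξ : Conf N => ξ x = true), statMeas N k p ξ

/-- `ℓ_N(ξ) = min {x ∈ {1,…,N} : ξ(x) = 1}`, the position of the leftmost particle. -/
noncomputable def leftPos {N : ℕ} (ξ : Conf N) : ℕ :=
  sInf {x | ∃ y : Fin N, ξ y = true ∧ x = (y : ℕ) + 1}

/-- `r_N(ξ) = max {x ∈ {1,…,N} : ξ(x) = 0}`, the position of the rightmost empty site. -/
noncomputable def rightEmpty {N : ℕ} (ξ : Conf N) : ℕ :=
  sSup {x | ∃ y : Fin N, ξ y = false ∧ x = (y : ℕ) + 1}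

/-- `Q₁(ξ)`: maximal length of a run of consecutive empty sites. -/
noncomputable def runEmpty {N : ℕ} (ξ : Conf N) : ℕ :=
  sSup {n | 1 ≤ n ∧ ∃ i, i + n ≤ N ∧
    ∀ y : Fin N, i ≤ (y : ℕ) → (y : ℕ) < i + n → ξ y = false}

/-- `Q₂(ξ)`: maximal length of a run of consecutive occupied sites. -/
noncomputable def runFull {N : ℕ} (ξ : Conf N) : ℕ :=
  sSup {n | 1 ≤ n ∧ ∃ i, i + n ≤ N ∧
    ∀ y : Fin N, i ≤ (y : ℕ) → (y : ℕ) < i + n → ξ y = true}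

/-- `Q(ξ) = max(Q₁(ξ), Q₂(ξ))`. -/
noncomputable def Qmax {N : ℕ} (ξ : Conf N) : ℕ := max (runEmpty ξ) (runFull ξ)

/-- `L_N(ζ) = max{x : ζ(x) = −x}` for a height function `ζ`. -/
noncomputable def LNh {N : ℕ} (ξ : Conf N) : ℕ :=
  sSup {x | x ≤ N ∧ height ξ x = -(x : ℤ)}

/-- `R_N(ζ) = min{x : ζ(x) = x − 2(N−k)}` for a height function `ζ`. -/
noncomputable def RNh (k : ℕ) {N : ℕ} (ξ : Conf N) : ℕ :=
  sInf {x | x ≤ N ∧ height ξ x = (x : ℤ) - 2 * ((N : ℤ) - k)}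

/-- `D_N(ζ) = max(|L_N(ζ) − (N−k)|, |R_N(ζ) − (N−k)|)`. -/
noncomputable def DNh (k : ℕ) {N : ℕ} (ξ : Conf N) : ℤ :=
  max |(LNh ξ : ℤ) - ((N : ℤ) - k)| |(RNh k ξ : ℤ) - ((N : ℤ) - k)|

/-- `H_ζ(x) = λ^{(N−k)/2}·(λ^{ζ(x)/2} − a_{N,k}(x))/(λ−1)`. -/
noncomputable def Hfun (N k : ℕ) (p : ℝ) (a : ℕ → ℝ) (ξ : Conf N) (x : ℕ) : ℝ :=
  lam p ^ (((N : ℝ) - k) / 2) * ((lam p ^ ((height ξ x : ℝ) / 2) - a x) / (lam p - 1))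

/-- Variance of `f` under the (probability vector) `μ`. -/
noncomputable def varOf {S : Type*} [Fintype S] (μ f : S → ℝ) : ℝ :=
  (∑ x, μ x * f x ^ 2) - (∑ x, μ x * f x) ^ 2

/-- Total variation distance between the pushforwards of `μ` and `ν` by `g`. -/
noncomputable def tvPush {S : Type*} [Fintype S] (μ ν : S → ℝ) (g : S → ℕ) : ℝ :=
  ⨆ A : Set ℕ,
    ((∑ x ∈ Finset.univ.filter (fun x => g x ∈ A), μ x) -
      ∑ x ∈ Finset.univ.filter (fun x => g x ∈ A), ν x)

/-- The scaling limit `ℓ_α(t)` of the (rescaled) position of the leftmost particle. -/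
noncomputable def ellAlpha (α t : ℝ) : ℝ :=
  if t ≤ α then 0
  else if (Real.sqrt α + Real.sqrt (1 - α)) ^ 2 ≤ t then 1 - α
  else (Real.sqrt t - Real.sqrt α) ^ 2

/-- The scaling limit `r_α(t)` of the (rescaled) position of the rightmost empty site. -/
noncomputable def rAlpha (α t : ℝ) : ℝ :=
  if t ≤ 1 - α then 1
  else if (Real.sqrt α + Real.sqrt (1 - α)) ^ 2 ≤ t then 1 - α
  else 1 - (Real.sqrt t - Real.sqrt (1 - α)) ^ 2

end Wasep

namespace Wasep

lemma height_zero {N : ℕ} (ξ : Conf N) : height ξ 0 = 0 := by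
  simp [height]

lemma filter_lt_succ {N : ℕ} (x : ℕ) (hx : x < N) :
    (Finset.univ.filter fun y : Fin N => (y : ℕ) < x + 1)
      = insert ⟨x, hx⟩ (Finset.univ.filter fun y : Fin N => (y : ℕ) < x) := by
  ext z
  simp [Fin.ext_iff]
  omega

lemma height_succ {N : ℕ} (ξ : Conf N) (x : ℕ) (hx : x < N) :
    height ξ (x + 1) = height ξ x + (if ξ ⟨x, hx⟩ then 1 else -1) := by
  unfold height
  rw [filter_lt_succ x hx, Finset.sum_insert (by simp)]
  ring

lemma height_swap_ne {N : ℕ} (ξ : Conf N) (y : Fin (N - 1)) (x : ℕ) (hx : x ≠ y.1 + 1) :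
    height (swapBond ξ y) x = height ξ x := by
  have hy : y.1 < N - 1 := y.isLt
  unfold height swapBond
  refine Finset.sum_equiv (Equiv.swap (siteA y) (siteB y)) ?_ ?_
  · intro z
    simp only [Finset.mem_filter, Finset.mem_univ, true_and]
    rcases eq_or_ne z (siteA y) with rfl | h1
    · rw [Equiv.swap_apply_left]
      simp only [siteA, siteB]
      omega
    · rcases eq_or_ne z (siteB y) with rfl | h2
      · rw [Equiv.swap_apply_right]
        simp only [siteA, siteB]
        omega
      · rw [Equiv.swap_apply_of_ne_of_ne h1 h2]
  · intro z hz
    simp [Function.comp]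

lemma height_univ {N k : ℕ} (ξ : Conf N) (h : numParticles ξ = k) :
    height ξ N = 2 * (k : ℤ) - N := by
  unfold height
  have h1 : (Finset.univ.filter fun y : Fin N => (y : ℕ) < N) = Finset.univ := by
    ext z; simp [z.isLt]
  have h2 : ∀ y : Fin N, (if ξ y then (1 : ℤ) else -1)
      = 2 * (if ξ y = true then (1 : ℤ) else 0) - 1 := by
    intro y; cases hy : ξ y <;> simp [hy]
  have h3 : ∑ y : Fin N, (if ξ y = true then (1 : ℤ) else 0) = k := by
    rw [Finset.sum_boole]
    unfold numParticles at h
    exact_mod_cast h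
  rw [h1, Finset.sum_congr rfl fun y _ => h2 y, Finset.sum_sub_distrib,
    ← Finset.mul_sum, h3]
  simp [Finset.card_univ, mul_comm]

lemma telescope (g : ℕ → ℝ) (n : ℕ) :
    ∑ y ∈ Finset.range n, (g y + g (y + 2) - 2 * g (y + 1))
      = g 0 + g (n + 1) - g 1 - g n := by
  induction n with
  | zero => simp
  | succ m ih => rw [Finset.sum_range_succ, ih]; ring

lemma rpow_shift {L : ℝ} (hL : 0 < L) (h m : ℤ) :
    L ^ (((h + m : ℤ) : ℝ) / 2) = L ^ ((h : ℝ) / 2) * Real.sqrt L ^ m := by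
  rw [Real.sqrt_eq_rpow, ← Real.rpow_intCast (L ^ ((1:ℝ) / 2)) m,
    ← Real.rpow_mul hL.le, ← Real.rpow_add hL]
  congr 1
  push_cast
  ring

lemma fZero_swap_diff (N : ℕ) (p : ℝ) (a : ℕ → ℝ) {ξ : Conf N} (y : Fin (N - 1)) :
    fZero N p a (swapBond ξ y) - fZero N p a ξ =
      (lam p ^ ((height (swapBond ξ y) (y.1 + 1) : ℝ) / 2)
        - lam p ^ ((height ξ (y.1 + 1) : ℝ) / 2)) / (lam p - 1) := by
  have hy : y.1 < N - 1 := y.isLt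
  unfold fZero
  rw [← Finset.sum_sub_distrib,
    Finset.sum_eq_single_of_mem (y.1 + 1) (by simp [Finset.mem_Icc])
      (fun b hb hne => by rw [height_swap_ne ξ y b hne]; ring)]
  ring

lemma bond_identity {N : ℕ} {p : ℝ} (hp1 : 1 / 2 < p) (hp2 : p < 1)
    (a : ℕ → ℝ) (ξ : Conf N) (y : Fin (N - 1)) :
    rate p ξ y * (fZero N p a (swapBond ξ y) - fZero N p a ξ) =
      (Real.sqrt (p * (1 - p)) *
          (lam p ^ ((height ξ y.1 : ℝ) / 2) + lam p ^ ((height ξ (y.1 + 2) : ℝ) / 2))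
        - lam p ^ ((height ξ (y.1 + 1) : ℝ) / 2)) / (lam p - 1) := by
  have hq : 0 < 1 - p := by linarith
  have hp0 : 0 < p := by linarith
  have hL : 0 < lam p := div_pos hp0 hq
  have hy : y.1 < N - 1 := y.isLt
  have hy1 : y.1 < N := by omega
  have hy2 : y.1 + 1 < N := by omega
  set sp := Real.sqrt p with hsp_def
  set sq := Real.sqrt (1 - p) with hsq_def
  have hsp2 : sp ^ 2 = p := Real.sq_sqrt hp0.le
  have hsq2 : sq ^ 2 = 1 - p := Real.sq_sqrt hq.le
  have hsp0 : 0 < sp := Real.sqrt_pos.2 hp0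
  have hsq0 : 0 < sq := Real.sqrt_pos.2 hq
  have hsum : sp ^ 2 + sq ^ 2 = 1 := by rw [hsp2, hsq2]; ring
  have hlt : sq ^ 2 < sp ^ 2 := by rw [hsp2, hsq2]; linarith
  have hpq : Real.sqrt (p * (1 - p)) = sp * sq := Real.sqrt_mul hp0.le _
  have hrt : Real.sqrt (lam p) = sp / sq := by
    rw [lam, Real.sqrt_div hp0.le]
  have hd : sp ^ 2 / sq ^ 2 - 1 ≠ 0 := by
    have : 1 < sp ^ 2 / sq ^ 2 := (one_lt_div (by positivity)).2 hlt
    linarith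
  have hsw : swapBond ξ y (siteA y) = ξ (siteB y) := by
    simp [swapBond, Function.comp, Equiv.swap_apply_left]
  rw [fZero_swap_diff, ← mul_div_assoc]
  congr 1
  have e1 : height ξ (y.1 + 1) = height ξ y.1 + (if ξ (siteA y) then 1 else -1) :=
    height_succ ξ y.1 hy1
  have e2 : height ξ (y.1 + 2) = height ξ (y.1 + 1) + (if ξ (siteB y) then 1 else -1) :=
    height_succ ξ (y.1 + 1) hy2
  have e3 : height (swapBond ξ y) (y.1 + 1)
      = height ξ y.1 + (if ξ (siteB y) then 1 else -1) := by
    rw [height_succ (swapBond ξ y) y.1 hy1, height_swap_ne ξ y y.1 (by omega),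
      show (⟨y.1, hy1⟩ : Fin N) = siteA y from rfl, hsw]
  cases hA : ξ (siteA y) <;> cases hB : ξ (siteB y) <;>
    simp only [hA, hB, if_true, if_false, Bool.false_eq_true, Bool.true_eq_false,
      ite_true, ite_false] at e1 e2 e3 <;>
    rw [e2, e3, e1] <;>
    simp only [rate, hA, hB, Bool.false_eq_true, Bool.true_eq_false, and_true, and_false,
      true_and, false_and, if_true, if_false, ite_true, ite_false, add_zero, zero_add] <;>
    simp only [rpow_shift hL, zpow_one, zpow_neg, zpow_one] <;>
    rw [hrt, hpq] <;>
    set s := lam p ^ ((height ξ y.1 : ℝ) / 2) with hs_def <;>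
    (try simp only [← hsq2, ← hsp2]) <;>
    field_simp
  · linear_combination (-s) * hsum
  · linear_combination (-(sp ^ 2 * s)) * hsum
  · linear_combination (-s) * hsum
  · linear_combination (-s) * hsum


set_option maxHeartbeats 1000000 in
/-- (a) Action of the generator on `f^{(0)}_{N,k}`, and (b) the resulting
contraction inequality for ordered pairs of height functions. -/
theorem generator_on_fZero
    (N k : ℕ) (p : ℝ) (hN : 2 ≤ N) (hk : 1 ≤ k ∧ k < N)
    (hp : p ∈ Set.Ioo (1 / 2 : ℝ) 1)
    (a : ℕ → ℝ) (ha : IsBVP N k p a) :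
    (∀ ξ : Conf N, numParticles ξ = k →
      gen N p (fZero N p a) ξ =
        -(rho p) * fZero N p a ξ -
          Real.sqrt (p * (1 - p)) / (lam p - 1) *
            (lam p ^ ((height ξ (N - 1) : ℝ) / 2) + lam p ^ ((height ξ 1 : ℝ) / 2)
              - a (N - 1) - a 1)) ∧
    (∀ ξ ξ' : Conf N, numParticles ξ = k → numParticles ξ' = k → heightLE ξ ξ' →
      gen N p (fZero N p a) ξ' - gen N p (fZero N p a) ξ ≤
        -(rho p) * (fZero N p a ξ' - fZero N p a ξ)) := by
  obtain ⟨hp1, hp2⟩ := hp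
  have hq : 0 < 1 - p := by linarith
  have hp0 : 0 < p := by linarith
  have hL : 0 < lam p := div_pos hp0 hq
  have hL1 : 1 < lam p := (one_lt_div hq).2 (by linarith)
  have hdne : lam p - 1 ≠ 0 := by linarith
  have hN1 : N - 1 + 1 = N := by omega
  have hrho2 : rho p = 1 - 2 * Real.sqrt (p * (1 - p)) := by
    rw [rho, Real.sqrt_mul hp0.le]
    linear_combination Real.sq_sqrt hp0.le + Real.sq_sqrt hq.le
  have key : ∀ ξ : Conf N, numParticles ξ = k →
      gen N p (fZero N p a) ξ =
        -(rho p) * fZero N p a ξ -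
          Real.sqrt (p * (1 - p)) / (lam p - 1) *
            (lam p ^ ((height ξ (N - 1) : ℝ) / 2) + lam p ^ ((height ξ 1 : ℝ) / 2)
              - a (N - 1) - a 1) := by
    intro ξ hξ
    have hgen : gen N p (fZero N p a) ξ
        = ∑ i ∈ Finset.range (N - 1),
            (Real.sqrt (p * (1 - p)) * (lam p ^ ((height ξ i : ℝ) / 2)
                + lam p ^ ((height ξ (i + 2) : ℝ) / 2))
              - lam p ^ ((height ξ (i + 1) : ℝ) / 2)) / (lam p - 1) := by
      unfold gen
      rw [Finset.sum_congr rfl fun y _ => bond_identity hp1 hp2 a ξ y]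
      exact Fin.sum_univ_eq_sum_range
        (fun i => (Real.sqrt (p * (1 - p)) * (lam p ^ ((height ξ i : ℝ) / 2)
                + lam p ^ ((height ξ (i + 2) : ℝ) / 2))
              - lam p ^ ((height ξ (i + 1) : ℝ) / 2)) / (lam p - 1)) (N - 1)
    have htelU : ∑ i ∈ Finset.range (N - 1),
        (lam p ^ ((height ξ i : ℝ) / 2) + lam p ^ ((height ξ (i + 2) : ℝ) / 2)
          - 2 * lam p ^ ((height ξ (i + 1) : ℝ) / 2))
        = lam p ^ ((height ξ 0 : ℝ) / 2) + lam p ^ ((height ξ N : ℝ) / 2)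
          - lam p ^ ((height ξ 1 : ℝ) / 2) - lam p ^ ((height ξ (N - 1) : ℝ) / 2) := by
      have h := telescope (fun x => lam p ^ ((height ξ x : ℝ) / 2)) (N - 1)
      rw [hN1] at h
      exact h
    have htela : ∑ i ∈ Finset.range (N - 1),
        (a i + a (i + 2) - 2 * a (i + 1)) = a 0 + a N - a 1 - a (N - 1) := by
      have h := telescope a (N - 1)
      rw [hN1] at h
      exact h
    have hBVP : Real.sqrt (p * (1 - p)) * (a 0 + a N - a 1 - a (N - 1))
        = rho p * ∑ i ∈ Finset.range (N - 1), a (i + 1) := by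
      rw [← htela, Finset.mul_sum, Finset.mul_sum]
      refine Finset.sum_congr rfl fun i hi => ?_
      have hx := ha.2.2 (i + 1) (by omega) (by simp at hi; omega)
      simp only [Nat.add_sub_cancel] at hx
      linear_combination hx
    have hU0 : lam p ^ ((height ξ 0 : ℝ) / 2) = 1 := by
      rw [height_zero]
      norm_num
    have hUN : lam p ^ ((height ξ N : ℝ) / 2) = a N := by
      rw [height_univ ξ hξ, ha.2.1]
      congr 1
      push_cast
      ring
    have hfz : fZero N p a ξ = (∑ i ∈ Finset.range (N - 1),
        lam p ^ ((height ξ (i + 1) : ℝ) / 2) - ∑ i ∈ Finset.range (N - 1), a (i + 1))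
          / (lam p - 1) := by
      unfold fZero
      rw [← Finset.Ico_add_one_right_eq_Icc, hN1, Finset.sum_Ico_eq_sum_range]
      calc ∑ i ∈ Finset.range (N - 1),
              (lam p ^ ((height ξ (1 + i) : ℝ) / 2) - a (1 + i)) / (lam p - 1)
          = ∑ i ∈ Finset.range (N - 1),
              (lam p ^ ((height ξ (i + 1) : ℝ) / 2) - a (i + 1)) / (lam p - 1) :=
            Finset.sum_congr rfl fun i _ => by rw [add_comm 1 i]
        _ = (∑ i ∈ Finset.range (N - 1), lam p ^ ((height ξ (i + 1) : ℝ) / 2)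
              - ∑ i ∈ Finset.range (N - 1), a (i + 1)) / (lam p - 1) := by
            rw [← Finset.sum_div, Finset.sum_sub_distrib]
    have hsplit : ∑ i ∈ Finset.range (N - 1),
        (Real.sqrt (p * (1 - p)) * (lam p ^ ((height ξ i : ℝ) / 2)
            + lam p ^ ((height ξ (i + 2) : ℝ) / 2))
          - lam p ^ ((height ξ (i + 1) : ℝ) / 2))
        = Real.sqrt (p * (1 - p)) * (∑ i ∈ Finset.range (N - 1),
            (lam p ^ ((height ξ i : ℝ) / 2) + lam p ^ ((height ξ (i + 2) : ℝ) / 2)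
              - 2 * lam p ^ ((height ξ (i + 1) : ℝ) / 2)))
          + (2 * Real.sqrt (p * (1 - p)) - 1) *
              ∑ i ∈ Finset.range (N - 1), lam p ^ ((height ξ (i + 1) : ℝ) / 2) := by
      rw [Finset.mul_sum, Finset.mul_sum, ← Finset.sum_add_distrib]
      exact Finset.sum_congr rfl fun i _ => by ring
    rw [hrho2] at hBVP
    rw [hgen, ← Finset.sum_div, hsplit, htelU, hU0, hUN, hfz, hrho2]
    have ha0 := ha.1
    linear_combination (lam p - 1)⁻¹ * hBVP - Real.sqrt (p * (1 - p)) * (lam p - 1)⁻¹ * ha0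
  refine ⟨key, fun ξ ξ' h1 h2 hle => ?_⟩
  rw [key ξ h1, key ξ' h2]
  have hc : 0 ≤ Real.sqrt (p * (1 - p)) / (lam p - 1) :=
    div_nonneg (Real.sqrt_nonneg _) (by linarith)
  have hm : ∀ x ≤ N, lam p ^ ((height ξ x : ℝ) / 2) ≤ lam p ^ ((height ξ' x : ℝ) / 2) := by
    intro x hx
    refine Real.rpow_le_rpow_of_exponent_le hL1.le ?_
    have hxx := hle x hx
    have : ((height ξ x : ℤ) : ℝ) ≤ ((height ξ' x : ℤ) : ℝ) := by exact_mod_cast hxx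
    linarith
  have h1' := hm (N - 1) (by omega)
  have h2' := hm 1 (by omega)
  have hBB : (0:ℝ) ≤ (lam p ^ ((height ξ' (N - 1) : ℝ) / 2) + lam p ^ ((height ξ' 1 : ℝ) / 2)
      - a (N - 1) - a 1) - (lam p ^ ((height ξ (N - 1) : ℝ) / 2)
      + lam p ^ ((height ξ 1 : ℝ) / 2) - a (N - 1) - a 1) := by linarith
  nlinarith [mul_nonneg hc hBB]

end Wasep
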